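/- The formal power series E(t) defined by B_t(E(t)) = 0 satisfies the Riemann–Hopf hierarchy: ∂E/∂t_i = (E^i / i!) · ∂E/∂t_0 for every i ≥ 0. -/

import Mathlib

/-- Formal partial derivative `∂/∂tⱼ` on `ℚ[[t₀, t₁, …]]`. -/
noncomputable def pd (j : ℕ) (F : MvPowerSeries ℕ ℚ) : MvPowerSeries ℕ ℚ :=
  fun d => (d j + 1 : ℕ) • MvPowerSeries.coeff (d + Finsupp.single j 1) F

namespace RH

open MvPowerSeries Finset

def degf (d : ℕ →₀ ℕ) : ℕ := d.sum fun _ m => m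

lemma degf_add (a b : ℕ →₀ ℕ) : degf (a + b) = degf a + degf b := by
  simpa [degf] using Finsupp.sum_add_index' (h := fun _ m => m) (fun _ => rfl) (fun _ _ _ => rfl)

lemma degf_single (j n : ℕ) : degf (Finsupp.single j n) = n := by
  simp [degf, Finsupp.sum_single_index]

lemma coeff_pd (j : ℕ) (F : MvPowerSeries ℕ ℚ) (d : ℕ →₀ ℕ) :
    MvPowerSeries.coeff d (pd j F) =
      ((d j : ℚ) + 1) * MvPowerSeries.coeff (d + Finsupp.single j 1) F := by
  show (d j + 1 : ℕ) • MvPowerSeries.coeff (d + Finsupp.single j 1) F = _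
  rw [nsmul_eq_mul]
  push_cast
  ring

lemma sum_antidiag_shift (d e : ℕ →₀ ℕ) (f : (ℕ →₀ ℕ) → (ℕ →₀ ℕ) → ℚ)
    (hf : ∀ u v : ℕ →₀ ℕ, u + v = d + e → ¬ e ≤ u → f u v = 0) :
    ∑ q ∈ Finset.HasAntidiagonal.antidiagonal (d + e), f q.1 q.2 =
      ∑ p ∈ Finset.HasAntidiagonal.antidiagonal d, f (p.1 + e) p.2 := by
  classical
  rw [← Finset.sum_filter_of_ne (p := fun q : (ℕ →₀ ℕ) × (ℕ →₀ ℕ) => e ≤ q.1)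
    (fun q hq hne => by
      by_contra h
      exact hne (hf q.1 q.2 (Finset.HasAntidiagonal.mem_antidiagonal.mp hq) h))]
  refine (Finset.sum_nbij' (i := fun p : (ℕ →₀ ℕ) × (ℕ →₀ ℕ) => (p.1 + e, p.2))
    (j := fun q : (ℕ →₀ ℕ) × (ℕ →₀ ℕ) => (q.1 - e, q.2)) ?_ ?_ ?_ ?_ ?_).symm
  · intro p hp
    rw [Finset.HasAntidiagonal.mem_antidiagonal] at hp
    simp only [Finset.mem_filter, Finset.HasAntidiagonal.mem_antidiagonal]
    exact ⟨by rw [add_right_comm, hp], le_add_self⟩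
  · intro q hq
    simp only [Finset.mem_filter, Finset.HasAntidiagonal.mem_antidiagonal] at hq
    rw [Finset.HasAntidiagonal.mem_antidiagonal]
    have h1 : q.1 - e + e = q.1 := tsub_add_cancel_of_le hq.2
    have h2 : q.1 - e + q.2 + e = d + e := by rw [add_right_comm, h1, hq.1]
    exact add_right_cancel h2
  · intro p _
    simp
  · intro q hq
    simp only [Finset.mem_filter, Finset.HasAntidiagonal.mem_antidiagonal] at hq
    simp [tsub_add_cancel_of_le hq.2]
  · intro p _
    rfl

lemma pd_mul (j : ℕ) (F G : MvPowerSeries ℕ ℚ) :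
    pd j (F * G) = pd j F * G + F * pd j G := by
  classical
  ext d
  set e := Finsupp.single j 1 with he
  rw [map_add, coeff_pd, MvPowerSeries.coeff_mul, MvPowerSeries.coeff_mul,
    MvPowerSeries.coeff_mul, Finset.mul_sum]
  have key : ∀ q ∈ Finset.HasAntidiagonal.antidiagonal (d + e),
      ((d j : ℚ) + 1) * (MvPowerSeries.coeff q.1 F * MvPowerSeries.coeff q.2 G)
        = (q.1 j : ℚ) * (MvPowerSeries.coeff q.1 F * MvPowerSeries.coeff q.2 G)
          + (q.2 j : ℚ) * (MvPowerSeries.coeff q.1 F * MvPowerSeries.coeff q.2 G) := by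
    intro q hq
    rw [Finset.HasAntidiagonal.mem_antidiagonal] at hq
    have hsum : q.1 j + q.2 j = d j + 1 := by
      have := congrArg (fun s : ℕ →₀ ℕ => s j) hq
      simpa [he, Finsupp.add_apply, Finsupp.single_apply] using this
    rw [← add_mul, ← Nat.cast_add, hsum]
    push_cast
    ring
  rw [Finset.sum_congr rfl key, Finset.sum_add_distrib]
  have hz : ∀ u v : ℕ →₀ ℕ, u + v = d + e → ¬ e ≤ u →
      ∀ x : ℚ, (u j : ℚ) * x = 0 := by
    intro u v _ hle x
    have hu : u j = 0 := by
      by_contra h0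
      exact hle (by simpa [he, Finsupp.single_le_iff] using Nat.one_le_iff_ne_zero.mpr h0)
    simp [hu]
  congr 1
  · refine (sum_antidiag_shift d e
      (fun u v => (u j : ℚ) * (MvPowerSeries.coeff u F * MvPowerSeries.coeff v G))
      (fun u v h hle => hz u v h hle _)).trans ?_
    refine Finset.sum_congr rfl fun p _ => ?_
    rw [coeff_pd]
    simp only [he, Finsupp.add_apply, Finsupp.single_apply, if_pos rfl]
    push_cast
    ring
  · refine ((Finsupp.sum_antidiagonal_swap (d + e)
      (fun u v => (v j : ℚ) * (MvPowerSeries.coeff u F * MvPowerSeries.coeff v G))).trans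
      ((sum_antidiag_shift d e
        (fun u v => (u j : ℚ) * (MvPowerSeries.coeff v F * MvPowerSeries.coeff u G))
        (fun u v h hle => hz u v h hle _)).trans ?_)).trans
      (Finsupp.sum_antidiagonal_swap d
      (fun u v => MvPowerSeries.coeff v F * MvPowerSeries.coeff u (pd j G)))
    refine Finset.sum_congr rfl fun p _ => ?_
    rw [coeff_pd]
    simp only [he, Finsupp.add_apply, Finsupp.single_apply, if_pos rfl]
    push_cast
    ring

lemma pd_one (j : ℕ) : pd j (1 : MvPowerSeries ℕ ℚ) = 0 := by
  ext d
  rw [coeff_pd, map_zero, MvPowerSeries.coeff_one, if_neg, mul_zero]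
  intro h
  have := congrArg (fun s : ℕ →₀ ℕ => s j) h
  simp [Finsupp.add_apply, Finsupp.single_apply] at this

lemma pd_X (j i : ℕ) :
    pd j (MvPowerSeries.X i : MvPowerSeries ℕ ℚ) =
      if j = i then 1 else 0 := by
  classical
  ext d
  rw [coeff_pd, MvPowerSeries.coeff_X]
  by_cases hji : j = i
  · subst hji
    by_cases hd : d = 0
    · subst hd
      simp [MvPowerSeries.coeff_one]
    · rw [if_pos rfl, MvPowerSeries.coeff_one, if_neg hd, if_neg, mul_zero]
      intro h
      apply hd
      have : d + Finsupp.single j 1 = 0 + Finsupp.single j 1 := by rw [zero_add, h]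
      exact add_right_cancel this
  · rw [if_neg, if_neg hji, map_zero, mul_zero]
    intro h
    have := congrArg (fun s : ℕ →₀ ℕ => s j) h
    simp [Finsupp.add_apply, Finsupp.single_apply, Ne.symm hji] at this

lemma pd_pow (j n : ℕ) (F : MvPowerSeries ℕ ℚ) :
    pd j (F ^ (n + 1)) = (n + 1) • (F ^ n * pd j F) := by
  induction n with
  | zero => simp
  | succ n ih =>
    rw [pow_succ, pd_mul, ih, smul_mul_assoc, mul_right_comm (F ^ n) (pd j F) F, ← pow_succ,
      succ_nsmul (F ^ (n + 1) * pd j F) (n + 1)]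

lemma degf_pos (u : ℕ →₀ ℕ) (hu : u ≠ 0) : 0 < degf u := by
  obtain ⟨a, ha⟩ : ∃ a, u a ≠ 0 := by
    by_contra h
    push_neg at h
    exact hu (Finsupp.ext h)
  have hmem : a ∈ u.support := Finsupp.mem_support_iff.mpr ha
  calc 0 < u a := Nat.pos_of_ne_zero ha
    _ ≤ degf u := Finset.single_le_sum (fun _ _ => Nat.zero_le _) hmem

lemma coeff_pow_mul_eq_zero {E : MvPowerSeries ℕ ℚ}
    (hE0 : MvPowerSeries.constantCoeff E = 0) :
    ∀ (i : ℕ) (H : MvPowerSeries ℕ ℚ) (d : ℕ →₀ ℕ), degf d < i →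
      MvPowerSeries.coeff d (E ^ i * H) = 0 := by
  intro i
  induction i with
  | zero => intro H d h; omega
  | succ i ih =>
    intro H d h
    rw [pow_succ', mul_assoc, MvPowerSeries.coeff_mul]
    refine Finset.sum_eq_zero fun q hq => ?_
    rw [Finset.HasAntidiagonal.mem_antidiagonal] at hq
    by_cases h1 : q.1 = 0
    · rw [h1]
      rw [MvPowerSeries.coeff_zero_eq_constantCoeff_apply, hE0, zero_mul]
    · have hdd : degf q.1 + degf q.2 = degf d := by rw [← degf_add, hq]
      have := degf_pos q.1 h1
      rw [ih H q.2 (by omega), mul_zero]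

lemma coeff_pow_eq_zero {E : MvPowerSeries ℕ ℚ}
    (hE0 : MvPowerSeries.constantCoeff E = 0) (i : ℕ) (d : ℕ →₀ ℕ)
    (h : degf d < i) : MvPowerSeries.coeff d (E ^ i) = 0 := by
  have := coeff_pow_mul_eq_zero hE0 i 1 d h
  rwa [mul_one] at this

lemma coeff_X_pow_mul_eq_zero {E : MvPowerSeries ℕ ℚ}
    (hE0 : MvPowerSeries.constantCoeff E = 0) (k i : ℕ) (H : MvPowerSeries ℕ ℚ)
    (d : ℕ →₀ ℕ) (h : degf d ≤ i) :
    MvPowerSeries.coeff d (MvPowerSeries.X k * (E ^ i * H)) = 0 := by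
  classical
  rw [MvPowerSeries.coeff_mul]
  refine Finset.sum_eq_zero fun q hq => ?_
  rw [Finset.HasAntidiagonal.mem_antidiagonal] at hq
  rw [MvPowerSeries.coeff_X]
  by_cases h1 : q.1 = Finsupp.single k 1
  · have hdd : degf q.1 + degf q.2 = degf d := by rw [← degf_add, hq]
    rw [h1, degf_single] at hdd
    rw [coeff_pow_mul_eq_zero hE0 i H q.2 (by omega), mul_zero]
  · rw [if_neg h1, zero_mul]

lemma coeff_X_pow_eq_zero {E : MvPowerSeries ℕ ℚ}
    (hE0 : MvPowerSeries.constantCoeff E = 0) (k i : ℕ)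
    (d : ℕ →₀ ℕ) (h : degf d ≤ i) :
    MvPowerSeries.coeff d (MvPowerSeries.X k * E ^ i) = 0 := by
  have := coeff_X_pow_mul_eq_zero hE0 k i 1 d h
  rwa [mul_one] at this

lemma degf_def (d : ℕ →₀ ℕ) : (d.sum fun _ m => m) = degf d := rfl

noncomputable def Gs (E : MvPowerSeries ℕ ℚ) : MvPowerSeries ℕ ℚ :=
  fun d => ∑ k ∈ Finset.range (degf d),
    (k.factorial : ℚ)⁻¹ * MvPowerSeries.coeff d (MvPowerSeries.X (k + 1) * E ^ k)

lemma coeff_Gs (E : MvPowerSeries ℕ ℚ) (d : ℕ →₀ ℕ) :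
    MvPowerSeries.coeff d (Gs E) =
      ∑ k ∈ Finset.range (degf d),
        (k.factorial : ℚ)⁻¹ * MvPowerSeries.coeff d (MvPowerSeries.X (k + 1) * E ^ k) := rfl

lemma constantCoeff_Gs (E : MvPowerSeries ℕ ℚ) :
    MvPowerSeries.constantCoeff (Gs E) = 0 := by
  rw [← MvPowerSeries.coeff_zero_eq_constantCoeff_apply, coeff_Gs]
  have : degf (0 : ℕ →₀ ℕ) = 0 := by simp [degf]
  rw [this]
  simp

lemma coeff_Gs_mul {E : MvPowerSeries ℕ ℚ}
    (hE0 : MvPowerSeries.constantCoeff E = 0) (H : MvPowerSeries ℕ ℚ)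
    (d : ℕ →₀ ℕ) (N : ℕ) (hN : degf d ≤ N) :
    MvPowerSeries.coeff d (Gs E * H) =
      ∑ k ∈ Finset.range N, (k.factorial : ℚ)⁻¹ *
        MvPowerSeries.coeff d (MvPowerSeries.X (k + 1) * E ^ k * H) := by
  classical
  rw [MvPowerSeries.coeff_mul]
  have step1 : ∀ q ∈ Finset.HasAntidiagonal.antidiagonal d,
      MvPowerSeries.coeff q.1 (Gs E) * MvPowerSeries.coeff q.2 H =
      ∑ k ∈ Finset.range N, (k.factorial : ℚ)⁻¹ *
        (MvPowerSeries.coeff q.1 (MvPowerSeries.X (k + 1) * E ^ k) *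
          MvPowerSeries.coeff q.2 H) := by
    intro q hq
    rw [Finset.HasAntidiagonal.mem_antidiagonal] at hq
    have hle : degf q.1 ≤ N := by
      have hdd : degf q.1 + degf q.2 = degf d := by rw [← degf_add, hq]
      omega
    rw [coeff_Gs, Finset.sum_mul]
    refine (Finset.sum_subset (Finset.range_subset_range.mpr hle) ?_).trans
      (Finset.sum_congr rfl fun k _ => by ring)
    intro k _ hk2
    rw [Finset.mem_range, not_lt] at hk2
    rw [coeff_X_pow_eq_zero hE0 (k + 1) k q.1 hk2, mul_zero, zero_mul]
  rw [Finset.sum_congr rfl step1, Finset.sum_comm]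
  exact Finset.sum_congr rfl fun k _ => by
    rw [← Finset.mul_sum, MvPowerSeries.coeff_mul]

lemma fact_succ_inv (k : ℕ) :
    (((k + 1).factorial : ℚ))⁻¹ * ((k : ℚ) + 1) = ((k.factorial : ℚ))⁻¹ := by
  have h1 : ((k : ℚ) + 1) ≠ 0 := by positivity
  have h2 : (k.factorial : ℚ) ≠ 0 := Nat.cast_ne_zero.mpr k.factorial_ne_zero
  rw [Nat.factorial_succ]
  push_cast
  field_simp

lemma main_eq (E : MvPowerSeries ℕ ℚ)
    (hE0 : MvPowerSeries.constantCoeff E = 0)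
    (hEeq : ∀ d : ℕ →₀ ℕ,
      MvPowerSeries.coeff d E =
        ∑ i ∈ Finset.range ((d.sum fun _ m => m) + 1),
          (i.factorial : ℚ)⁻¹ * MvPowerSeries.coeff d (MvPowerSeries.X i * E ^ i))
    (j : ℕ) :
    (1 - Gs E) * pd j E = (j.factorial : ℚ)⁻¹ • E ^ j := by
  classical
  ext d
  rw [sub_mul, one_mul, map_sub, map_smul]
  have hdeg : degf (d + Finsupp.single j 1) + 1 = degf d + 2 := by
    rw [degf_add, degf_single]
  have e1 : MvPowerSeries.coeff d (pd j E)
      = ∑ i ∈ Finset.range (degf d + 2), (i.factorial : ℚ)⁻¹ *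
          MvPowerSeries.coeff d (pd j (MvPowerSeries.X i * E ^ i)) := by
    rw [coeff_pd, hEeq (d + Finsupp.single j 1)]
    simp only [degf_def]
    rw [hdeg, Finset.mul_sum]
    refine Finset.sum_congr rfl fun i _ => ?_
    rw [coeff_pd]
    ring
  have e2 : ∀ i : ℕ, pd j (MvPowerSeries.X i * E ^ i)
      = (if j = i then 1 else 0) * E ^ i + MvPowerSeries.X i * pd j (E ^ i) := by
    intro i
    rw [pd_mul, pd_X]
  rw [e1]
  simp only [e2, map_add, mul_add, Finset.sum_add_distrib]
  have hS1 : ∑ i ∈ Finset.range (degf d + 2), (i.factorial : ℚ)⁻¹ *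
      MvPowerSeries.coeff d ((if j = i then 1 else 0) * E ^ i)
      = (j.factorial : ℚ)⁻¹ * MvPowerSeries.coeff d (E ^ j) := by
    have congr1 : ∀ i ∈ Finset.range (degf d + 2), (i.factorial : ℚ)⁻¹ *
        MvPowerSeries.coeff d ((if j = i then 1 else 0) * E ^ i)
        = if j = i then (i.factorial : ℚ)⁻¹ * MvPowerSeries.coeff d (E ^ i) else 0 := by
      intro i _
      by_cases h : j = i
      · rw [if_pos h, if_pos h, one_mul]
      · rw [if_neg h, if_neg h, zero_mul, map_zero, mul_zero]
    rw [Finset.sum_congr rfl congr1, Finset.sum_ite_eq]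
    by_cases hj : j ∈ Finset.range (degf d + 2)
    · rw [if_pos hj]
    · rw [if_neg hj]
      rw [Finset.mem_range, not_lt] at hj
      rw [coeff_pow_eq_zero hE0 j d (by omega), mul_zero]
  have hS2 : ∑ i ∈ Finset.range (degf d + 2), (i.factorial : ℚ)⁻¹ *
      MvPowerSeries.coeff d (MvPowerSeries.X i * pd j (E ^ i))
      = MvPowerSeries.coeff d (Gs E * pd j E) := by
    rw [coeff_Gs_mul hE0 (pd j E) d (degf d + 1) (by omega)]
    rw [show degf d + 2 = (degf d + 1) + 1 from rfl, Finset.sum_range_succ']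
    rw [pow_zero, pd_one, mul_zero, map_zero, mul_zero, add_zero]
    refine Finset.sum_congr rfl fun k _ => ?_
    rw [pd_pow j k E, mul_smul_comm, map_nsmul, nsmul_eq_mul,
      ← mul_assoc (MvPowerSeries.X (k + 1)) (E ^ k) (pd j E)]
    push_cast
    rw [← mul_assoc, fact_succ_inv]
  rw [hS1, hS2, smul_eq_mul]
  ring

end RH

/-- The formal power series `E(t)` defined by `B_t(E(t)) = 0`
(the unique solution with zero constant term, the equation stated coefficientwise)
satisfies the Riemann–Hopf hierarchy: `∂E/∂tᵢ = (Eⁱ/i!)·∂E/∂t₀` for every `i ≥ 0`. -/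
theorem E_satisfies_Riemann_Hopf
    (E : MvPowerSeries ℕ ℚ)
    (hE0 : MvPowerSeries.constantCoeff E = 0)
    (hEeq : ∀ d : ℕ →₀ ℕ,
      MvPowerSeries.coeff d E =
        ∑ i ∈ Finset.range ((d.sum fun _ m => m) + 1),
          (i.factorial : ℚ)⁻¹ * MvPowerSeries.coeff d (MvPowerSeries.X i * E ^ i)) :
    ∀ i : ℕ, pd i E = (i.factorial : ℚ)⁻¹ • (E ^ i * pd 0 E) := by
  intro j
  have key := RH.main_eq E hE0 hEeq
  have h0 : (1 - RH.Gs E) * pd 0 E = 1 := by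
    simpa using key 0
  have hne : (1 - RH.Gs E) ≠ 0 := by
    intro h
    have := congrArg (MvPowerSeries.constantCoeff) h
    rw [map_sub, map_one, RH.constantCoeff_Gs, map_zero] at this
    norm_num at this
  apply mul_left_cancel₀ hne
  rw [key j, mul_smul_comm, mul_left_comm, h0, mul_one]
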